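/- Let K be a compact operator on a Hilbert space with K*K injective, α > 0, and suppose φ† = (K*K)^{β/2} w for some w ∈ H and 0 < β ≤ 2 (source condition). Then the Tikhonov bias satisfies ‖(αId+K*K)⁻¹K*Kφ† - φ†‖ = ‖α(αId+K*K)⁻¹ φ†‖ ≤ C α^{β/2} ‖w‖, where C = sup_{λ≥0} α^{1-β/2} λ^{β/2}/(α+λ) ≤ 1. -/

import Mathlib

open scoped ENNReal

open scoped RealInnerProductSpace

private lemma tik_scalar_bound {α l t : ℝ} (hα : 0 < α) (hl : 0 ≤ l) (ht : 0 ≤ t)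
    (ht1 : t ≤ 1) : α * (α + l)⁻¹ * l ^ t ≤ α ^ t := by
  have hal : 0 < α + l := by linarith
  have hmix : α ^ t * α ^ (1 - t) = α := by
    rw [← Real.rpow_add hα]; norm_num
  have h1 : α ^ (1 - t) * l ^ t ≤ (1 - t) * α + t * l :=
    Real.geom_mean_le_arith_mean2_weighted (by linarith) ht hα.le hl (by ring)
  have h2 : (1 - t) * α + t * l ≤ α + l := by nlinarith
  have key : α * l ^ t ≤ α ^ t * (α + l) := by
    calc α * l ^ t = α ^ t * (α ^ (1 - t) * l ^ t) := by rw [← mul_assoc, hmix]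
      _ ≤ α ^ t * ((1 - t) * α + t * l) :=
        mul_le_mul_of_nonneg_left h1 (Real.rpow_nonneg hα.le t)
      _ ≤ α ^ t * (α + l) :=
        mul_le_mul_of_nonneg_left h2 (Real.rpow_nonneg hα.le t)
  calc α * (α + l)⁻¹ * l ^ t = (α * l ^ t) * (α + l)⁻¹ := by ring
    _ ≤ (α ^ t * (α + l)) * (α + l)⁻¹ :=
      mul_le_mul_of_nonneg_right key (inv_nonneg.mpr hal.le)
    _ = α ^ t := by field_simp

private lemma tik_inner_of_hasSum {H : Type*} [NormedAddCommGroup H]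
    [InnerProductSpace ℝ H] [CompleteSpace H]
    (b : HilbertBasis ℕ ℝ H) (f : ℕ → ℝ) (x : H)
    (h : HasSum (fun i => f i • b i) x) (i : ℕ) : ⟪b i, x⟫ = f i := by
  have h2 := h.mapL (innerSL ℝ (b i))
  have h3 : (fun j => innerSL ℝ (b i) (f j • b j)) = fun j => if j = i then f i else 0 := by
    funext j
    have := orthonormal_iff_ite.mp b.orthonormal i j
    simp only [innerSL_apply_apply, real_inner_smul_right, this]
    by_cases hij : j = i
    · subst hij; simp
    · simp [hij, Ne.symm hij]
  rw [h3] at h2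
  simpa using h2.unique (hasSum_ite_eq i (f i))

private lemma tik_norm_sq_of_hasSum {H : Type*} [NormedAddCommGroup H]
    [InnerProductSpace ℝ H] [CompleteSpace H]
    (b : HilbertBasis ℕ ℝ H) (f : ℕ → ℝ) (x : H)
    (h : HasSum (fun i => f i • b i) x) : ‖x‖ ^ 2 = ∑' i, f i ^ 2 := by
  have := b.tsum_inner_mul_inner x x
  have hi : ∀ i, ⟪b i, x⟫ = f i := tik_inner_of_hasSum b f x h
  have hco : ∀ i, ⟪x, b i⟫ * ⟪b i, x⟫ = f i ^ 2 := by
    intro i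
    have hxi : ⟪x, b i⟫ = f i := by rw [real_inner_comm]; exact hi i
    rw [hi i, hxi]; ring
  rw [← real_inner_self_eq_norm_sq, ← this]
  exact tsum_congr fun i => hco i

private lemma tik_sq_summable {H : Type*} [NormedAddCommGroup H]
    [InnerProductSpace ℝ H] [CompleteSpace H]
    (b : HilbertBasis ℕ ℝ H) (x : H) : Summable fun i => ⟪b i, x⟫ ^ 2 := by
  have h := b.summable_inner_mul_inner x x
  refine h.congr fun i => ?_
  rw [real_inner_comm x (b i)]
  ring

set_option maxHeartbeats 1000000 in
theorem tikhonov_bias_source_condition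
    {H : Type*} [NormedAddCommGroup H] [InnerProductSpace ℝ H] [CompleteSpace H]
    (K : H →L[ℝ] H) (hK_cpt : IsCompactOperator K)
    (hKK_inj : Function.Injective (K.adjoint ∘L K))
    (e : HilbertBasis ℕ ℝ H) (l : ℕ → ℝ) (hl : ∀ j, 0 ≤ l j)
    (heig : ∀ j, (K.adjoint ∘L K) (e j) = l j • e j)
    (α β : ℝ) (hα : 0 < α) (hβ : 0 < β) (hβ2 : β ≤ 2)
    (w φd : H)
    (hsource : φd = ∑' j : ℕ, ((l j ^ (β / 2)) * (inner ℝ (e j) w : ℝ)) • e j) :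
    ‖Ring.inverse (α • (1 : H →L[ℝ] H) + K.adjoint ∘L K) ((K.adjoint ∘L K) φd) - φd‖
        = ‖α • Ring.inverse (α • (1 : H →L[ℝ] H) + K.adjoint ∘L K) φd‖ ∧
    ‖α • Ring.inverse (α • (1 : H →L[ℝ] H) + K.adjoint ∘L K) φd‖ ≤ α ^ (β / 2) * ‖w‖ := by
  classical
  set T : H →L[ℝ] H := K.adjoint ∘L K with hT
  set A : H →L[ℝ] H := α • (1 : H →L[ℝ] H) + T with hA
  -- A is coercive, hence invertible by Lax–Milgram
  have hTx : ∀ x : H, ⟪T x, x⟫ = ‖K x‖ ^ 2 := by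
    intro x
    rw [hT]
    simp only [ContinuousLinearMap.comp_apply]
    rw [ContinuousLinearMap.adjoint_inner_left, real_inner_self_eq_norm_sq]
  have hAx : ∀ x : H, ⟪A x, x⟫ = α * ‖x‖ ^ 2 + ‖K x‖ ^ 2 := by
    intro x
    simp only [hA, ContinuousLinearMap.add_apply, ContinuousLinearMap.smul_apply,
      ContinuousLinearMap.one_apply, inner_add_left, real_inner_smul_left]
    rw [hTx, real_inner_self_eq_norm_sq]
  set B : H →L[ℝ] H →L[ℝ] ℝ := (innerSL ℝ).comp A with hB
  have hcoercive : IsCoercive B := by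
    refine ⟨α, hα, fun u => ?_⟩
    have := hAx u
    simp only [hB, ContinuousLinearMap.comp_apply, innerSL_apply_apply]
    nlinarith [sq_nonneg ‖K u‖, sq_abs ‖u‖]
  set E := hcoercive.continuousLinearEquivOfBilin with hE
  have hEA : (E : H →L[ℝ] H) = A := by
    ext x
    refine ext_inner_right ℝ fun y => ?_
    rw [ContinuousLinearEquiv.coe_coe]
    rw [hcoercive.continuousLinearEquivOfBilin_apply x y]
    simp [hB]
  have h1 : A ∘L (E.symm : H →L[ℝ] H) = 1 := by
    ext x
    rw [ContinuousLinearMap.comp_apply, ← hEA]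
    simp
  have h2 : (E.symm : H →L[ℝ] H) ∘L A = 1 := by
    ext x
    rw [ContinuousLinearMap.comp_apply, ← hEA]
    simp
  have hAunit : IsUnit A :=
    ⟨⟨A, (E.symm : H →L[ℝ] H), by rw [ContinuousLinearMap.mul_def]; exact h1,
      by rw [ContinuousLinearMap.mul_def]; exact h2⟩, rfl⟩
  set iA : H →L[ℝ] H := Ring.inverse A with hiA
  have hiA_A : ∀ x : H, iA (A x) = x := by
    intro x
    have h1 : iA * A = 1 := Ring.inverse_mul_cancel A hAunit
    have := congrArg (fun f : H →L[ℝ] H => f x) h1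
    simpa [ContinuousLinearMap.mul_apply] using this
  -- Part 1
  have part1 : iA (T φd) - φd = -(α • iA φd) := by
    have hTeq : T φd = A φd - α • φd := by simp [hA]
    rw [hTeq, map_sub, hiA_A, map_smul]
    abel
  -- eigen computations
  have hAe : ∀ j, A (e j) = (α + l j) • e j := by
    intro j
    simp [hA, heig j, add_smul]
  have hαl : ∀ j, (0:ℝ) < α + l j := fun j => by have := hl j; linarith
  have hiAe : ∀ j, iA (e j) = (α + l j)⁻¹ • e j := by
    intro j
    have h1 : iA ((α + l j) • e j) = e j := by rw [← hAe j, hiA_A]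
    rw [map_smul] at h1
    have h2 : (α + l j)⁻¹ • ((α + l j) • iA (e j)) = (α + l j)⁻¹ • e j := by rw [h1]
    rwa [smul_smul, inv_mul_cancel₀ (hαl j).ne', one_smul] at h2
  -- source condition: summability
  set t : ℝ := β / 2 with htdef
  have ht0 : 0 < t := by positivity
  have ht1 : t ≤ 1 := by rw [htdef]; linarith
  set c : ℕ → ℝ := fun j => l j ^ t * ⟪e j, w⟫ with hc
  have hTnorm : ∀ j, l j ≤ ‖T‖ := by
    intro j
    have h1 : ‖T (e j)‖ ≤ ‖T‖ * ‖e j‖ := T.le_opNorm (e j)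
    have h2 : ‖e j‖ = 1 := e.orthonormal.1 j
    rw [heig j, norm_smul, h2, Real.norm_eq_abs, abs_of_nonneg (hl j)] at h1
    simpa [h2] using h1
  have hTn0 : (0:ℝ) ≤ ‖T‖ := norm_nonneg _
  have hcs : Summable fun j => c j ^ 2 := by
    refine Summable.of_nonneg_of_le (fun j => sq_nonneg _)
      (fun j => ?_) (((tik_sq_summable e w).mul_left ((‖T‖ ^ t) ^ 2)))
    have hb : l j ^ t ≤ ‖T‖ ^ t := Real.rpow_le_rpow (hl j) (hTnorm j) ht0.le
    have hb0 : (0:ℝ) ≤ l j ^ t := Real.rpow_nonneg (hl j) t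
    calc c j ^ 2 = (l j ^ t) ^ 2 * ⟪e j, w⟫ ^ 2 := by rw [hc]; ring
      _ ≤ (‖T‖ ^ t) ^ 2 * ⟪e j, w⟫ ^ 2 := by
          apply mul_le_mul_of_nonneg_right _ (sq_nonneg _)
          exact pow_le_pow_left₀ hb0 hb 2
  have hcmem : Memℓp c 2 := by
    apply memℓp_gen
    have : (fun j => ‖c j‖ ^ (2:ℝ≥0∞).toReal) = fun j => c j ^ 2 := by
      funext j
      rw [ENNReal.toReal_ofNat, Real.rpow_two, Real.norm_eq_abs, sq_abs]
    rw [this]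
    exact hcs
  set F : lp (fun _ : ℕ => ℝ) 2 := ⟨c, hcmem⟩ with hF
  have hFsum : HasSum (fun j => c j • e j) (e.repr.symm F) := e.hasSum_repr_symm F
  have hφd : HasSum (fun j => c j • e j) φd := by
    have : φd = e.repr.symm F := by rw [hsource, ← hFsum.tsum_eq]
    rw [this]; exact hFsum
  -- apply α • iA to the sum
  set S : H →L[ℝ] H := α • iA with hS
  set d : ℕ → ℝ := fun j => α * (α + l j)⁻¹ * c j with hd
  have hv : HasSum (fun j => d j • e j) (α • iA φd) := by
    have h1 := hφd.mapL S
    have h2 : ∀ j, S (c j • e j) = d j • e j := by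
      intro j
      rw [hS, hd]
      simp only [ContinuousLinearMap.smul_apply, map_smul, hiAe j, smul_smul]
      congr 1
      ring
    have h3 : S φd = α • iA φd := by simp [hS]
    rw [← h3]
    exact h1.congr_fun fun j => (h2 j).symm
  -- norms
  have hdle : ∀ j, d j ^ 2 ≤ (α ^ t) ^ 2 * ⟪e j, w⟫ ^ 2 := by
    intro j
    have hbd : α * (α + l j)⁻¹ * l j ^ t ≤ α ^ t :=
      tik_scalar_bound hα (hl j) ht0.le ht1
    have hbd0 : 0 ≤ α * (α + l j)⁻¹ * l j ^ t :=
      mul_nonneg (mul_nonneg hα.le (inv_nonneg.mpr (hαl j).le)) (Real.rpow_nonneg (hl j) t)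
    have : d j = (α * (α + l j)⁻¹ * l j ^ t) * ⟪e j, w⟫ := by rw [hd, hc]; ring
    rw [this, mul_pow]
    exact mul_le_mul_of_nonneg_right (pow_le_pow_left₀ hbd0 hbd 2) (sq_nonneg _)
  have hds : Summable fun j => d j ^ 2 :=
    Summable.of_nonneg_of_le (fun j => sq_nonneg _) hdle
      ((tik_sq_summable e w).mul_left _)
  have hnormsq : ‖α • iA φd‖ ^ 2 ≤ (α ^ t * ‖w‖) ^ 2 := by
    rw [tik_norm_sq_of_hasSum e d _ hv]
    have hw2 : ‖w‖ ^ 2 = ∑' j, ⟪e j, w⟫ ^ 2 :=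
      tik_norm_sq_of_hasSum e _ w (by simpa [e.repr_apply_apply] using e.hasSum_repr w)
    calc ∑' j, d j ^ 2 ≤ ∑' j, (α ^ t) ^ 2 * ⟪e j, w⟫ ^ 2 :=
          Summable.tsum_le_tsum hdle hds ((tik_sq_summable e w).mul_left _)
      _ = (α ^ t) ^ 2 * ∑' j, ⟪e j, w⟫ ^ 2 := tsum_mul_left
      _ = (α ^ t * ‖w‖) ^ 2 := by rw [← hw2]; ring
  have hfinal : ‖α • iA φd‖ ≤ α ^ t * ‖w‖ := by
    have h0 : (0:ℝ) ≤ α ^ t * ‖w‖ := by positivity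
    nlinarith [norm_nonneg (α • iA φd)]
  constructor
  · rw [part1, norm_neg]
  · exact hfinal
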